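/- Let h > 0, δ ∈ [0,1], and 0 ≤ τ ≤ τ_M := h/(√2·(1−δ) + δ). Then for every u : ℤ × ℤ → ℝ and every (i,j) ∈ ℤ × ℤ, the explicit erosion update u'(i,j) := u(i,j) − τ·(E u)(i,j) satisfies min_{(a,b)∈{−1,0,1}²} u(i+a, j+b) ≤ u'(i,j) ≤ u(i,j). Consequently, if m ≤ u ≤ M pointwise, then m ≤ u' ≤ M pointwise. -/

import Mathlib

/-- The weighted Rouy–Tourin discretisation of the erosion speed `|∇u|` (downwind version). -/
noncomputable def erosionSpeed (h δ : ℝ) (u : ℤ × ℤ → ℝ) (p : ℤ × ℤ) : ℝ :=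
  ((1 - δ) / h) *
      Real.sqrt
        ((max (u p - u (p.1 + 1, p.2)) (max (u p - u (p.1 - 1, p.2)) 0)) ^ 2
          + (max (u p - u (p.1, p.2 + 1)) (max (u p - u (p.1, p.2 - 1)) 0)) ^ 2)
    + (δ / (Real.sqrt 2 * h)) *
      Real.sqrt
        ((max (u p - u (p.1 + 1, p.2 + 1)) (max (u p - u (p.1 - 1, p.2 - 1)) 0)) ^ 2
          + (max (u p - u (p.1 - 1, p.2 + 1)) (max (u p - u (p.1 + 1, p.2 - 1)) 0)) ^ 2)

/-- The set of offsets `{-1,0,1} × {-1,0,1}` describing the 3×3 neighbourhood. -/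
noncomputable def offsets : Finset (ℤ × ℤ) := (Finset.Icc (-1 : ℤ) 1) ×ˢ (Finset.Icc (-1 : ℤ) 1)

lemma offsets_nonempty : offsets.Nonempty := ⟨(0, 0), by decide⟩

lemma sqrt_sum_sq_le {a b c : ℝ} (ha : 0 ≤ a) (hb : 0 ≤ b) (hac : a ≤ c) (hbc : b ≤ c) :
    Real.sqrt (a ^ 2 + b ^ 2) ≤ Real.sqrt 2 * c := by
  have hc : 0 ≤ c := le_trans ha hac
  have hle : a ^ 2 + b ^ 2 ≤ 2 * c ^ 2 := by nlinarith
  calc Real.sqrt (a ^ 2 + b ^ 2) ≤ Real.sqrt (2 * c ^ 2) := Real.sqrt_le_sqrt hle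
    _ = Real.sqrt 2 * c := by
        rw [Real.sqrt_mul (by norm_num), Real.sqrt_sq hc]

set_option maxHeartbeats 1000000 in
theorem erosion_update_bounds
    (h δ τ : ℝ) (hh : 0 < h) (hδ : δ ∈ Set.Icc (0 : ℝ) 1)
    (hτ0 : 0 ≤ τ) (hτ : τ ≤ h / (Real.sqrt 2 * (1 - δ) + δ))
    (u : ℤ × ℤ → ℝ) :
    (∀ p : ℤ × ℤ,
        offsets.inf' offsets_nonempty (fun q => u (p.1 + q.1, p.2 + q.2))
            ≤ u p - τ * erosionSpeed h δ u p ∧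
          u p - τ * erosionSpeed h δ u p ≤ u p) ∧
      (∀ m M : ℝ, (∀ p, m ≤ u p ∧ u p ≤ M) →
        ∀ p, m ≤ u p - τ * erosionSpeed h δ u p ∧ u p - τ * erosionSpeed h δ u p ≤ M) := by
  obtain ⟨hδ0, hδ1⟩ := hδ
  have hs2 : (1 : ℝ) ≤ Real.sqrt 2 := by
    rw [show (1 : ℝ) = Real.sqrt 1 from (Real.sqrt_one).symm]
    exact Real.sqrt_le_sqrt (by norm_num)
  have hs2pos : (0 : ℝ) < Real.sqrt 2 := lt_of_lt_of_le one_pos hs2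
  have hKpos : (0 : ℝ) < Real.sqrt 2 * (1 - δ) + δ := by nlinarith
  have hτK : τ * (Real.sqrt 2 * (1 - δ) + δ) ≤ h := by
    rw [← le_div_iff₀ hKpos]; exact hτ
  have key : ∀ p : ℤ × ℤ,
      offsets.inf' offsets_nonempty (fun q => u (p.1 + q.1, p.2 + q.2))
          ≤ u p - τ * erosionSpeed h δ u p ∧
        u p - τ * erosionSpeed h δ u p ≤ u p := by
    intro p
    set m := offsets.inf' offsets_nonempty (fun q => u (p.1 + q.1, p.2 + q.2)) with hm
    have hle : ∀ q ∈ offsets, m ≤ u (p.1 + q.1, p.2 + q.2) := by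
      intro q hq; exact Finset.inf'_le _ hq
    have h00 : m ≤ u p := by simpa using hle (0, 0) (by decide)
    have hE : m ≤ u (p.1 + 1, p.2) := by simpa using hle (1, 0) (by decide)
    have hW : m ≤ u (p.1 - 1, p.2) := by
      simpa [sub_eq_add_neg] using hle (-1, 0) (by decide)
    have hN : m ≤ u (p.1, p.2 + 1) := by simpa using hle (0, 1) (by decide)
    have hS : m ≤ u (p.1, p.2 - 1) := by
      simpa [sub_eq_add_neg] using hle (0, -1) (by decide)
    have hNE : m ≤ u (p.1 + 1, p.2 + 1) := by simpa using hle (1, 1) (by decide)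
    have hSW : m ≤ u (p.1 - 1, p.2 - 1) := by
      simpa [sub_eq_add_neg] using hle (-1, -1) (by decide)
    have hNW : m ≤ u (p.1 - 1, p.2 + 1) := by
      simpa [sub_eq_add_neg] using hle (-1, 1) (by decide)
    have hSE : m ≤ u (p.1 + 1, p.2 - 1) := by
      simpa [sub_eq_add_neg] using hle (1, -1) (by decide)
    set d := u p - m with hd
    have hd0 : 0 ≤ d := by simp [hd]; linarith
    set a1 := max (u p - u (p.1 + 1, p.2)) (max (u p - u (p.1 - 1, p.2)) 0) with ha1
    set b1 := max (u p - u (p.1, p.2 + 1)) (max (u p - u (p.1, p.2 - 1)) 0) with hb1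
    set a2 := max (u p - u (p.1 + 1, p.2 + 1)) (max (u p - u (p.1 - 1, p.2 - 1)) 0) with ha2
    set b2 := max (u p - u (p.1 - 1, p.2 + 1)) (max (u p - u (p.1 + 1, p.2 - 1)) 0) with hb2
    have ha1n : 0 ≤ a1 := le_trans (le_max_right _ 0) (le_max_right _ _)
    have hb1n : 0 ≤ b1 := le_trans (le_max_right _ 0) (le_max_right _ _)
    have ha2n : 0 ≤ a2 := le_trans (le_max_right _ 0) (le_max_right _ _)
    have hb2n : 0 ≤ b2 := le_trans (le_max_right _ 0) (le_max_right _ _)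
    have ha1d : a1 ≤ d := max_le (by linarith) (max_le (by linarith) hd0)
    have hb1d : b1 ≤ d := max_le (by linarith) (max_le (by linarith) hd0)
    have ha2d : a2 ≤ d := max_le (by linarith) (max_le (by linarith) hd0)
    have hb2d : b2 ≤ d := max_le (by linarith) (max_le (by linarith) hd0)
    have hS1 : Real.sqrt (a1 ^ 2 + b1 ^ 2) ≤ Real.sqrt 2 * d :=
      sqrt_sum_sq_le ha1n hb1n ha1d hb1d
    have hS2 : Real.sqrt (a2 ^ 2 + b2 ^ 2) ≤ Real.sqrt 2 * d :=
      sqrt_sum_sq_le ha2n hb2n ha2d hb2d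
    have hS1n : 0 ≤ Real.sqrt (a1 ^ 2 + b1 ^ 2) := Real.sqrt_nonneg _
    have hS2n : 0 ≤ Real.sqrt (a2 ^ 2 + b2 ^ 2) := Real.sqrt_nonneg _
    have hc1 : 0 ≤ (1 - δ) / h := div_nonneg (by linarith) hh.le
    have hc2 : 0 ≤ δ / (Real.sqrt 2 * h) := div_nonneg hδ0 (by positivity)
    have hEeq : erosionSpeed h δ u p =
        (1 - δ) / h * Real.sqrt (a1 ^ 2 + b1 ^ 2)
          + δ / (Real.sqrt 2 * h) * Real.sqrt (a2 ^ 2 + b2 ^ 2) := rfl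
    have hEnonneg : 0 ≤ erosionSpeed h δ u p := by
      rw [hEeq]; positivity
    have hEle : erosionSpeed h δ u p ≤ (Real.sqrt 2 * (1 - δ) + δ) / h * d := by
      rw [hEeq]
      have t1 : (1 - δ) / h * Real.sqrt (a1 ^ 2 + b1 ^ 2)
          ≤ (1 - δ) / h * (Real.sqrt 2 * d) := mul_le_mul_of_nonneg_left hS1 hc1
      have t2 : δ / (Real.sqrt 2 * h) * Real.sqrt (a2 ^ 2 + b2 ^ 2)
          ≤ δ / (Real.sqrt 2 * h) * (Real.sqrt 2 * d) := mul_le_mul_of_nonneg_left hS2 hc2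
      have teq : (1 - δ) / h * (Real.sqrt 2 * d) + δ / (Real.sqrt 2 * h) * (Real.sqrt 2 * d)
          = (Real.sqrt 2 * (1 - δ) + δ) / h * d := by
        field_simp
      linarith
    have hfinal : τ * erosionSpeed h δ u p ≤ d := by
      have t3 : τ * erosionSpeed h δ u p ≤ τ * ((Real.sqrt 2 * (1 - δ) + δ) / h * d) :=
        mul_le_mul_of_nonneg_left hEle hτ0
      have t4 : τ * ((Real.sqrt 2 * (1 - δ) + δ) / h * d) ≤ d := by
        rw [show τ * ((Real.sqrt 2 * (1 - δ) + δ) / h * d)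
            = (τ * (Real.sqrt 2 * (1 - δ) + δ)) / h * d by ring]
        have hc : (τ * (Real.sqrt 2 * (1 - δ) + δ)) / h ≤ 1 := by
          rw [div_le_one hh]; linarith
        exact mul_le_of_le_one_left hd0 hc
      linarith
    have hfinal' : τ * erosionSpeed h δ u p ≤ u p - m := hfinal
    have hnn : 0 ≤ τ * erosionSpeed h δ u p := mul_nonneg hτ0 hEnonneg
    exact ⟨by linarith, by linarith⟩
  refine ⟨key, ?_⟩
  intro m M hmM p
  have h1 := key p
  have hminf : m ≤ offsets.inf' offsets_nonempty (fun q => u (p.1 + q.1, p.2 + q.2)) :=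
    Finset.le_inf' _ _ (fun q _ => (hmM _).1)
  exact ⟨le_trans hminf h1.1, le_trans h1.2 (hmM p).2⟩
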